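/- Fix an integer k ≥ 2, a real ε > 0, and a hypergraph G on n nodes such that ε·n is a nonnegative integer and k divides (1+ε)·n. Let G' be the hypergraph obtained from G by adding ε·n isolated nodes (nodes belonging to no hyperedge), so that G' has n' = (1+ε)·n nodes. Then for every integer L, G' admits a k-way partitioning with all parts of size exactly n'/k and connectivity cost at most L if and only if G admits an ε-balanced k-way partitioning of connectivity cost at most L; the same equivalence holds with connectivity cost replaced by cut-net cost. -/

import Mathlib

open Finset

private lemma filter_card_sum_split {α β : Type*} [Fintype α] [Fintype β]
    [DecidableEq α] [DecidableEq β] (p : α ⊕ β → Prop) [DecidablePred p] :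
    (univ.filter p).card
      = (univ.filter fun a => p (Sum.inl a)).card + (univ.filter fun b => p (Sum.inr b)).card := by
  have h1 : (univ.filter p).toLeft = univ.filter fun a => p (Sum.inl a) := by ext a; simp
  have h2 : (univ.filter p).toRight = univ.filter fun b => p (Sum.inr b) := by ext b; simp
  rw [← Finset.card_toLeft_add_card_toRight (u := univ.filter p), h1, h2]

private lemma exists_fn_fiber_card {β : Type*} [DecidableEq β] :
    ∀ (k : ℕ) (s : Finset β) (d : Fin (k + 1) → ℕ), (∑ i, d i) = s.card →
      ∃ f : β → Fin (k + 1), ∀ i, (s.filter fun b => f b = i).card = d i := by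
  intro k
  induction k with
  | zero =>
    intro s d h
    refine ⟨fun _ => 0, fun i => ?_⟩
    have hi : i = 0 := Fin.ext (by omega)
    subst hi
    rw [Finset.filter_true_of_mem (fun _ _ => rfl), ← h, Fin.sum_univ_one]
  | succ k ih =>
    intro s d h
    have hle : d (Fin.last (k + 1)) ≤ s.card := by
      rw [← h]; exact Finset.single_le_sum (fun _ _ => Nat.zero_le _) (mem_univ _)
    obtain ⟨t, hts, htc⟩ := Finset.exists_subset_card_eq hle
    have hsum : (∑ i : Fin (k + 1), d i.castSucc) = (s \ t).card := by
      rw [Finset.card_sdiff_of_subset hts, htc]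
      rw [Fin.sum_univ_castSucc] at h
      omega
    obtain ⟨g, hg⟩ := ih (s \ t) (fun i => d i.castSucc) hsum
    refine ⟨fun b => if b ∈ t then Fin.last (k + 1) else (g b).castSucc, fun i => ?_⟩
    induction i using Fin.lastCases with
    | last =>
      have : (s.filter fun b =>
          (if b ∈ t then Fin.last (k + 1) else (g b).castSucc) = Fin.last (k + 1)) = t := by
        ext b
        simp only [mem_filter]
        constructor
        · rintro ⟨hbs, hb⟩
          by_contra hbt
          rw [if_neg hbt] at hb
          exact (Fin.castSucc_lt_last (g b)).ne hb
        · intro hbt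
          exact ⟨hts hbt, if_pos hbt⟩
      rw [this, htc]
    | cast j =>
      have : (s.filter fun b =>
          (if b ∈ t then Fin.last (k + 1) else (g b).castSucc) = j.castSucc)
          = ((s \ t).filter fun b => g b = j) := by
        ext b
        simp only [mem_filter, mem_sdiff]
        constructor
        · rintro ⟨hbs, hb⟩
          by_cases hbt : b ∈ t
          · rw [if_pos hbt] at hb
            exact absurd hb.symm (Fin.castSucc_lt_last j).ne
          · rw [if_neg hbt] at hb
            exact ⟨⟨hbs, hbt⟩, Fin.castSucc_inj.mp hb⟩
        · rintro ⟨⟨hbs, hbt⟩, hb⟩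
          exact ⟨hbs, by rw [if_neg hbt, hb]⟩
      rw [this, hg j]

/-- **Reduction from `ε`-balanced partitioning to `k`-section via isolated nodes.**
Let `G` be a hypergraph on `n` nodes (node type `α`), `ε > 0` with `ε·n = m ∈ ℕ`, and
`k ∣ (1+ε)·n = n + m`.  Let `G'` be obtained from `G` by adding `m` isolated nodes, so
`G'` has `n' = n + m` nodes.  Then for every integer `L`: `G'` has a `k`-way partitioning
with all parts of size exactly `n'/k` and connectivity cost at most `L` iff `G` has an
`ε`-balanced `k`-way partitioning of connectivity cost at most `L`; and the same
equivalence holds for the cut-net cost. -/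
theorem isolated_nodes_reduction {α : Type*} [Fintype α] [DecidableEq α]
    (k : ℕ) (hk : 2 ≤ k) (ε : ℝ) (hε : 0 < ε)
    (E : Finset (Finset α)) (m : ℕ) (hm : (m : ℝ) = ε * Fintype.card α)
    (hdvd : k ∣ Fintype.card α + m) (L : ℤ) :
    ((∃ P' : α ⊕ Fin m → Fin k,
        (∀ i : Fin k,
          (Finset.univ.filter fun a => P' a = i).card = (Fintype.card α + m) / k) ∧
        ((∑ e ∈ E.image (fun e => e.image (Sum.inl : α → α ⊕ Fin m)),
            ((e.image P').card - 1) : ℕ) : ℤ) ≤ L) ↔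
      (∃ P : α → Fin k,
        (∀ i : Fin k, ((Finset.univ.filter fun a => P a = i).card : ℝ) ≤
          (1 + ε) * Fintype.card α / k) ∧
        ((∑ e ∈ E, ((e.image P).card - 1) : ℕ) : ℤ) ≤ L)) ∧
    ((∃ P' : α ⊕ Fin m → Fin k,
        (∀ i : Fin k,
          (Finset.univ.filter fun a => P' a = i).card = (Fintype.card α + m) / k) ∧
        ((((E.image (fun e => e.image (Sum.inl : α → α ⊕ Fin m))).filter
            fun e => 1 < (e.image P').card).card : ℕ) : ℤ) ≤ L) ↔
      (∃ P : α → Fin k,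
        (∀ i : Fin k, ((Finset.univ.filter fun a => P a = i).card : ℝ) ≤
          (1 + ε) * Fintype.card α / k) ∧
        (((E.filter fun e => 1 < (e.image P).card).card : ℕ) : ℤ) ≤ L)) := by
  set n := Fintype.card α with hn
  set q := (n + m) / k with hqdef
  have hk0 : k ≠ 0 := by omega
  have hkq : k * q = n + m := Nat.mul_div_cancel' hdvd
  -- the real balance bound equals `q`
  have hreal : (1 + ε) * (n : ℝ) / k = (q : ℝ) := by
    have : (1 + ε) * (n : ℝ) = (n : ℝ) + m := by rw [hm]; ring
    have h2 : ((n : ℝ) + m) = (k : ℝ) * q := by exact_mod_cast hkq.symm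
    have hk' : (k : ℝ) ≠ 0 := Nat.cast_ne_zero.mpr hk0
    rw [this, h2, mul_div_cancel_left₀ _ hk']
  -- injectivity of `e ↦ e.image Sum.inl`
  have hinj : ∀ x ∈ E, ∀ y ∈ E,
      x.image (Sum.inl : α → α ⊕ Fin m) = y.image Sum.inl → x = y := by
    intro x _ y _ h
    exact Finset.image_injective Sum.inl_injective h
  -- forward direction: from an exact partition, restriction is balanced
  have hfwd : ∀ P' : α ⊕ Fin m → Fin k,
      (∀ i : Fin k, (univ.filter fun a => P' a = i).card = (n + m) / k) →
      ∀ i : Fin k, (((univ.filter fun a => P' (Sum.inl a) = i).card : ℝ)) ≤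
        (1 + ε) * n / k := by
    intro P' hP' i
    rw [hreal]
    have hle : (univ.filter fun a => P' (Sum.inl a) = i).card ≤
        (univ.filter fun x => P' x = i).card := by
      apply Finset.card_le_card_of_injOn Sum.inl
      · intro a ha
        simp only [mem_coe, mem_filter, mem_univ, true_and] at ha ⊢
        exact ha
      · exact Sum.inl_injective.injOn
    rw [hP' i] at hle
    exact_mod_cast hle
  -- backward direction: extend a balanced partition to an exact partition
  have hbwd : ∀ P : α → Fin k,
      (∀ i : Fin k, ((univ.filter fun a => P a = i).card : ℝ) ≤ (1 + ε) * n / k) →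
      ∃ P' : α ⊕ Fin m → Fin k, (∀ a, P' (Sum.inl a) = P a) ∧
        (∀ i : Fin k, (univ.filter fun x => P' x = i).card = (n + m) / k) := by
    intro P hP
    have hc : ∀ i : Fin k, (univ.filter fun a => P a = i).card ≤ q := by
      intro i
      have := hP i
      rw [hreal] at this
      exact_mod_cast this
    have hcsum : (∑ i : Fin k, (univ.filter fun a => P a = i).card) = n := by
      rw [← Finset.card_eq_sum_card_fiberwise (fun x _ => mem_univ (P x))]
      simp [hn]
    have hdsum : (∑ i : Fin k, (q - (univ.filter fun a => P a = i).card)) = m := by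
      have h1 : (∑ i : Fin k, (q - (univ.filter fun a => P a = i).card))
          + (∑ i : Fin k, (univ.filter fun a => P a = i).card) = k * q := by
        rw [← Finset.sum_add_distrib]
        have : ∀ i : Fin k, q - (univ.filter fun a => P a = i).card
            + (univ.filter fun a => P a = i).card = q := fun i => Nat.sub_add_cancel (hc i)
        simp only [this, Finset.sum_const, card_univ, Fintype.card_fin, smul_eq_mul]
      rw [hcsum] at h1
      omega
    obtain ⟨k', rfl⟩ : ∃ k', k = k' + 1 := ⟨k - 1, by omega⟩
    obtain ⟨f, hf⟩ := exists_fn_fiber_card k' (univ : Finset (Fin m))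
      (fun i => q - (univ.filter fun a => P a = i).card) (by simpa using hdsum)
    refine ⟨Sum.elim P f, fun a => rfl, fun i => ?_⟩
    rw [filter_card_sum_split]
    simp only [Sum.elim_inl, Sum.elim_inr]
    show #{a | P a = i} + #{b | f b = i} = _
    rw [hf i, ← hqdef]
    have := hc i
    omega
  constructor
  · -- connectivity cost
    constructor
    · rintro ⟨P', hbal, hcost⟩
      refine ⟨fun a => P' (Sum.inl a), hfwd P' hbal, ?_⟩
      rw [Finset.sum_image hinj] at hcost
      simpa only [Finset.image_image, Function.comp_def] using hcost
    · rintro ⟨P, hbal, hcost⟩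
      obtain ⟨P', hPP, hbal'⟩ := hbwd P hbal
      refine ⟨P', hbal', ?_⟩
      rw [Finset.sum_image hinj]
      simp only [Finset.image_image, Function.comp]
      have hfun : P' ∘ Sum.inl = P := funext hPP
      rw [hfun]
      exact hcost
  · -- cut-net cost
    constructor
    · rintro ⟨P', hbal, hcost⟩
      refine ⟨fun a => P' (Sum.inl a), hfwd P' hbal, ?_⟩
      rw [Finset.filter_image, Finset.card_image_of_injOn] at hcost
      · simpa only [Finset.image_image, Function.comp_def] using hcost
      · intro x hx y hy h
        exact hinj x (Finset.mem_of_mem_filter x hx) y (Finset.mem_of_mem_filter y hy) h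
    · rintro ⟨P, hbal, hcost⟩
      obtain ⟨P', hPP, hbal'⟩ := hbwd P hbal
      refine ⟨P', hbal', ?_⟩
      rw [Finset.filter_image, Finset.card_image_of_injOn]
      · simp only [Finset.image_image, Function.comp]
        have hfun : P' ∘ Sum.inl = P := funext hPP
        rw [hfun]
        exact hcost
      · intro x hx y hy h
        exact hinj x (Finset.mem_of_mem_filter x hx) y (Finset.mem_of_mem_filter y hy) h
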